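/- Let (μ_{j,n})_{j,n∈ℕ} be nonnegative reals and (λ_{j,n})_{j,n∈ℕ} complex numbers such that: for each n, j ↦ μ_{j,n} is non-increasing and j ↦ |λ_{j,n}| is non-increasing; the Weyl inequalities ∏_{j=0}^{k} |λ_{j,n}| ≤ ∏_{j=0}^{k} μ_{j,n} hold for all k, n; and there is B > 0 with μ_{j,n} ≤ B for all j, n. Suppose N : ℕ → ℕ satisfies N(n) → ∞ and: for every ε > 0 there exists A_ε such that for all n ≥ A_ε, #{ j ∈ ℕ : μ_{j,n} > ε } < N(n). Then for every C > 1 and every ε > 0 there exists B_{C,ε} such that for all n ≥ B_{C,ε}, #{ j ∈ ℕ : |λ_{j,n}| > ε } ≤ C·N(n). -/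

import Mathlib

open Filter

/-- A finite lower subset of ℕ: every member is below the cardinality. -/
lemma mem_lt_ncard_of_lower {S : Set ℕ} (hS : S.Finite)
    (hlow : ∀ a b : ℕ, a ≤ b → b ∈ S → a ∈ S) {j : ℕ} (hj : j ∈ S) :
    j < S.ncard := by
  have h1 : (↑(Finset.Iic j) : Set ℕ) ⊆ S := by
    intro a ha
    simp only [Finset.coe_Iic, Set.mem_Iic] at ha
    exact hlow a j ha hj
  have h2 := Set.ncard_le_ncard h1 hS
  rw [Set.ncard_coe_finset, Nat.card_Iic] at h2
  omega

theorem eigenvalue_counting_from_singular_values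
    (μ : ℕ → ℕ → ℝ) (lam : ℕ → ℕ → ℂ)
    (hμ0 : ∀ j n, 0 ≤ μ j n)
    (hμmono : ∀ n, Antitone fun j => μ j n)
    (hlammono : ∀ n, Antitone fun j => ‖lam j n‖)
    (hWeyl : ∀ k n, ∏ j ∈ Finset.range (k + 1), ‖lam j n‖ ≤
      ∏ j ∈ Finset.range (k + 1), μ j n)
    (B : ℝ) (hB : 0 < B) (hBμ : ∀ j n, μ j n ≤ B)
    (Nf : ℕ → ℕ) (hNf : Tendsto Nf atTop atTop)
    (hcount : ∀ ε : ℝ, 0 < ε → ∃ A : ℕ, ∀ n ≥ A,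
      {j : ℕ | ε < μ j n}.Finite ∧ {j : ℕ | ε < μ j n}.ncard < Nf n) :
    ∀ C : ℝ, 1 < C → ∀ ε : ℝ, 0 < ε → ∃ B' : ℕ, ∀ n ≥ B',
      {j : ℕ | ε < ‖lam j n‖}.Finite ∧
      ({j : ℕ | ε < ‖lam j n‖}.ncard : ℝ) ≤ C * (Nf n : ℝ) := by
  intro C hC ε hε
  by_cases hεB : B ≤ ε
  · -- then no eigenvalue exceeds ε
    refine ⟨0, fun n _ => ?_⟩
    have hempty : {j : ℕ | ε < ‖lam j n‖} = ∅ := by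
      ext j
      simp only [Set.mem_setOf_eq, Set.mem_empty_iff_false, iff_false, not_lt]
      calc ‖lam j n‖ ≤ ‖lam 0 n‖ := hlammono n (Nat.zero_le j)
        _ ≤ μ 0 n := by have := hWeyl 0 n; simpa using this
        _ ≤ B := hBμ 0 n
        _ ≤ ε := hεB
    rw [hempty]
    refine ⟨Set.finite_empty, ?_⟩
    simp only [Set.ncard_empty, Nat.cast_zero]
    positivity
  · push_neg at hεB
    set t : ℝ := 1 / (C - 1) with ht_def
    have ht : 0 < t := by
      apply div_pos one_pos; linarith
    set δ : ℝ := ε * (ε / B) ^ t with hδ_def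
    have hεB' : ε / B < 1 := (div_lt_one hB).mpr hεB
    have hεB0 : 0 < ε / B := div_pos hε hB
    have hδ0 : 0 < δ := mul_pos hε (Real.rpow_pos_of_pos hεB0 t)
    have hδε : δ < ε := by
      have h1 : (ε / B) ^ t < 1 := Real.rpow_lt_one hεB0.le hεB' ht
      calc δ < ε * 1 := by
            apply mul_lt_mul_of_pos_left h1 hε
        _ = ε := mul_one ε
    obtain ⟨A, hA⟩ := hcount δ hδ0
    refine ⟨A, fun n hn => ?_⟩
    obtain ⟨hfinμ, hLN⟩ := hA n hn
    set L := ({j : ℕ | δ < μ j n}).ncard with hL_def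
    have hmemL : ∀ j : ℕ, δ < μ j n → j < L := by
      intro j hj
      exact mem_lt_ncard_of_lower hfinμ
        (fun a b hab hb => lt_of_lt_of_le hb (hμmono n hab)) hj
    have hμδ : ∀ j : ℕ, L ≤ j → μ j n ≤ δ := by
      intro j hj
      by_contra h
      push_neg at h
      exact absurd (hmemL j h) (by omega)
    -- key claim
    have key : ∀ m : ℕ, ε < ‖lam m n‖ → (m + 1 : ℝ) ≤ C * L := by
      intro m hm
      by_cases hmL : m + 1 ≤ L
      · have h1 : (m + 1 : ℝ) ≤ (L : ℝ) := by exact_mod_cast hmL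
        nlinarith [Nat.cast_nonneg (α := ℝ) L]
      · push_neg at hmL
        have h1 : ε ^ (m + 1) ≤ ∏ j ∈ Finset.range (m + 1), ‖lam j n‖ := by
          have := Finset.prod_le_prod (s := Finset.range (m + 1))
            (f := fun _ => ε) (g := fun j => ‖lam j n‖) (fun j _ => hε.le)
            (fun j hj => le_trans hm.le
              (hlammono n (Nat.lt_succ_iff.mp (Finset.mem_range.mp hj))))
          simpa using this
        have h3 : ∏ j ∈ Finset.range (m + 1), μ j n ≤ B ^ L * δ ^ (m + 1 - L) := by
          have hsplit : m + 1 = L + (m + 1 - L) := by omega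
          conv_lhs => rw [hsplit, Finset.prod_range_add]
          have hb1 : ∏ j ∈ Finset.range L, μ j n ≤ B ^ L := by
            have := Finset.prod_le_prod (s := Finset.range L)
              (f := fun j => μ j n) (g := fun _ => B)
              (fun j _ => hμ0 j n) (fun j _ => hBμ j n)
            simpa using this
          have hb2 : ∏ i ∈ Finset.range (m + 1 - L), μ (L + i) n ≤ δ ^ (m + 1 - L) := by
            have := Finset.prod_le_prod (s := Finset.range (m + 1 - L))
              (f := fun i => μ (L + i) n) (g := fun _ => δ)
              (fun i _ => hμ0 _ n)
              (fun i _ => hμδ (L + i) (Nat.le_add_right L i))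
            simpa using this
          have hnn : 0 ≤ ∏ i ∈ Finset.range (m + 1 - L), μ (L + i) n :=
            Finset.prod_nonneg (fun i _ => hμ0 _ n)
          exact mul_le_mul hb1 hb2 hnn (pow_nonneg hB.le L)
        have h4 : ε ^ (m + 1) ≤ B ^ L * δ ^ (m + 1 - L) :=
          le_trans h1 (le_trans (hWeyl m n) h3)
        have hlog := Real.log_le_log (pow_pos hε _) h4
        rw [Real.log_pow, Real.log_mul (by positivity) (by positivity),
          Real.log_pow, Real.log_pow] at hlog
        have hlogδ : Real.log δ = Real.log ε + t * (Real.log ε - Real.log B) := by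
          rw [hδ_def, Real.log_mul hε.ne' (by positivity),
            Real.log_rpow hεB0, Real.log_div hε.ne' hB.ne']
        have hs : Real.log ε < Real.log B := Real.log_lt_log hε hεB
        have htC : t * (C - 1) = 1 := by
          rw [ht_def]
          exact one_div_mul_cancel (by linarith)
        rw [hlogδ] at hlog
        have hcast : ((m + 1 - L : ℕ) : ℝ) = (m : ℝ) + 1 - (L : ℝ) := by
          have : L ≤ m + 1 := by omega
          push_cast [Nat.cast_sub this]
          ring
        rw [hcast] at hlog
        push_cast at hlog
        -- hlog : (m+1) log ε ≤ L log B + (m+1-L)(log ε + t(log ε - log B))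
        nlinarith [mul_pos ht (sub_pos.mpr hs),
          mul_nonneg (Nat.cast_nonneg (α := ℝ) L) (sub_pos.mpr hs).le,
          sub_pos.mpr hs]
    set S := {j : ℕ | ε < ‖lam j n‖} with hS_def
    have hfinS : S.Finite := by
      apply Set.Finite.subset (Set.finite_Iio (Nat.ceil (C * (L : ℝ))))
      intro m hm
      have := key m hm
      have : (m : ℝ) < C * L := by linarith
      exact Nat.lt_ceil.mpr this
    refine ⟨hfinS, ?_⟩
    have hLN' : (L : ℝ) ≤ (Nf n : ℝ) := by exact_mod_cast hLN.le
    have hC0 : (0 : ℝ) < C := by linarith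
    by_cases hne : S.Nonempty
    · obtain ⟨m, hmS, hmax⟩ := Set.Finite.exists_maximalFor id S hfinS hne
      have hsub : S ⊆ Set.Iic m := by
        intro j hj
        by_contra h
        simp only [Set.mem_Iic, not_le] at h
        have := hmax (j := j) hj (le_of_lt h)
        simp only [id] at this
        omega
      have h1 : S.ncard ≤ m + 1 := by
        have := Set.ncard_le_ncard hsub (Set.finite_Iic m)
        have h2 : (Set.Iic m).ncard = m + 1 := by
          rw [← Finset.coe_Iic, Set.ncard_coe_finset, Nat.card_Iic]
        omega
      calc (S.ncard : ℝ) ≤ (m : ℝ) + 1 := by exact_mod_cast h1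
        _ ≤ C * L := key m hmS
        _ ≤ C * Nf n := by
            apply mul_le_mul_of_nonneg_left hLN' hC0.le
    · rw [Set.not_nonempty_iff_eq_empty] at hne
      rw [hne]
      simp only [Set.ncard_empty, Nat.cast_zero]
      positivity
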